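/- For every rational number a and every polynomial f ∈ ℚ[t₁,t₂] with zero constant term (f(0,0) = 0), the quotient of the algebra B = Λ_ℚ(x,y) ⊗_ℚ ℚ[t₁,t₂] by the two-sided ideal generated by the single element (x∧y)⊗t₁ + a·(x∧y)⊗t₂ + 1⊗f is an infinite-dimensional ℚ-vector space. -/

import Mathlib

set_option synthInstance.maxHeartbeats 1000000
set_option maxHeartbeats 2000000

open TensorProduct

/-! ### Auxiliary material -/

/-- The variable-splitting equivalence `ℚ[t₁,t₂] ≃ (ℚ[Y])[X]`. -/
noncomputable def auxPhi : MvPolynomial (Fin 2) ℚ ≃ₐ[ℚ] Polynomial (Polynomial ℚ) :=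
  (MvPolynomial.finSuccEquiv ℚ 1).trans <| Polynomial.mapAlgEquiv <|
    (MvPolynomial.finSuccEquiv ℚ 0).trans <| Polynomial.mapAlgEquiv <|
      MvPolynomial.isEmptyAlgEquiv ℚ (Fin 0)

lemma auxPhi_X0 : auxPhi (MvPolynomial.X 0) = Polynomial.X := by
  simp [auxPhi, MvPolynomial.finSuccEquiv_X_zero, Polynomial.coe_mapAlgEquiv]

lemma auxPhi_X1 : auxPhi (MvPolynomial.X 1) = Polynomial.C Polynomial.X := by
  have h1 : (MvPolynomial.X 1 : MvPolynomial (Fin 2) ℚ) = MvPolynomial.X (Fin.succ 0) := rfl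
  simp [auxPhi, h1, MvPolynomial.finSuccEquiv_X_succ, Polynomial.coe_mapAlgEquiv,
    MvPolynomial.finSuccEquiv_X_zero]

/-- Evaluation of both variables at 0, as an algebra hom on `(ℚ[Y])[X]`. -/
noncomputable def auxChi : Polynomial (Polynomial ℚ) →ₐ[ℚ] ℚ :=
  (Polynomial.aeval (0 : ℚ)).comp ((Polynomial.aeval (0 : Polynomial ℚ)).restrictScalars ℚ)

lemma auxChi_apply (G : Polynomial (Polynomial ℚ)) : auxChi G = (G.coeff 0).coeff 0 := by
  simp [auxChi, Polynomial.coe_aeval_eq_eval, ← Polynomial.coeff_zero_eq_eval_zero]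

lemma auxChi_phi (f : MvPolynomial (Fin 2) ℚ) :
    auxChi (auxPhi f) = MvPolynomial.constantCoeff f := by
  have h : auxChi.comp auxPhi.toAlgHom =
      MvPolynomial.aeval (fun _ => (0 : ℚ)) := by
    apply MvPolynomial.algHom_ext
    intro i
    fin_cases i <;>
      simp [auxPhi_X0, auxPhi_X1, auxChi, Polynomial.coe_aeval_eq_eval]
  have h2 : auxChi (auxPhi f) = MvPolynomial.aeval (fun _ => (0 : ℚ)) f := by
    rw [← h]; rfl
  rw [h2, ← MvPolynomial.eval_zero']
  simp [MvPolynomial.aeval_def, MvPolynomial.eval, MvPolynomial.eval₂Hom]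

lemma auxChi_phi' (f : MvPolynomial (Fin 2) ℚ) (h : MvPolynomial.constantCoeff f = 0) :
    (((auxPhi f).coeff 0).coeff 0) = 0 := by
  rw [← auxChi_apply, auxChi_phi, h]

/-- If `F ∈ (ℚ[Y])[X]` has zero constant term, then there is an embedding of `ℚ[s]`
avoiding the multiples of `F`. -/
lemma aux_exists_rho (F : Polynomial (Polynomial ℚ)) (hF : (F.coeff 0).coeff 0 = 0) :
    ∃ ρ : Polynomial ℚ →ₐ[ℚ] Polynomial (Polynomial ℚ),
      ∀ p : Polynomial ℚ, F ∣ ρ p → p = 0 := by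
  by_cases hd : F.natDegree = 0
  · -- F = C c with c.coeff 0 = 0
    have hFC : F = Polynomial.C (F.coeff 0) := Polynomial.eq_C_of_natDegree_eq_zero hd
    set c := F.coeff 0 with hc
    refine ⟨Polynomial.mapAlgHom (Algebra.ofId ℚ (Polynomial ℚ)), ?_⟩
    intro p hdvd
    by_contra hp
    obtain ⟨g, hg⟩ := hdvd
    by_cases hc0 : c = 0
    · have : Polynomial.map (algebraMap ℚ (Polynomial ℚ)) p = 0 := by
        rw [show (Polynomial.mapAlgHom (Algebra.ofId ℚ (Polynomial ℚ))) p
            = Polynomial.map (algebraMap ℚ (Polynomial ℚ)) p from rfl] at hg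
        rw [hg, hFC]
        rw [show c = 0 from hc0]
        simp
      exact hp (Polynomial.map_injective _ (algebraMap ℚ (Polynomial ℚ)).injective
        (by simpa using this))
    · -- c ≠ 0 but c.coeff 0 = 0, so natDegree c > 0
      have hcd : c.natDegree ≠ 0 := by
        intro h0
        apply hc0
        rw [Polynomial.eq_C_of_natDegree_eq_zero h0, hF, map_zero]
      obtain ⟨n, hn⟩ : ∃ n, p.coeff n ≠ 0 := by
        by_contra h
        push_neg at h
        exact hp (Polynomial.ext fun n => by simp [h n])
      have hcoeff : Polynomial.C (p.coeff n) = c * g.coeff n := by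
        have := congrArg (fun q => Polynomial.coeff q n) hg
        simpa [Polynomial.coeff_map, hFC, ← hc, Polynomial.coeff_C_mul,
          Polynomial.algebraMap_eq] using this
      have hgn : g.coeff n ≠ 0 := by
        intro h0
        rw [h0, mul_zero] at hcoeff
        exact hn (by simpa using hcoeff)
      have := Polynomial.natDegree_mul hc0 hgn
      rw [← hcoeff, Polynomial.natDegree_C] at this
      omega
  · -- natDegree F > 0; use constants ℚ[Y] ⊂ (ℚ[Y])[X]
    have hF0 : F ≠ 0 := fun h => hd (by simp [h])
    refine ⟨(Polynomial.CAlgHom (R := ℚ) (A := Polynomial ℚ)), ?_⟩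
    intro p hdvd
    by_contra hp
    obtain ⟨g, hg⟩ := hdvd
    have hCp : (Polynomial.C p : Polynomial (Polynomial ℚ)) ≠ 0 := by
      simpa using hp
    have hg0 : g ≠ 0 := by
      intro h
      rw [h, mul_zero] at hg
      exact hCp (by simpa using hg)
    have := Polynomial.natDegree_mul hF0 hg0
    rw [show ((Polynomial.CAlgHom (R := ℚ) (A := Polynomial ℚ)) p : Polynomial (Polynomial ℚ))
        = Polynomial.C p from rfl] at hg
    rw [← hg, Polynomial.natDegree_C] at this
    omega

/-- Key lemma: the quotient of `(ℚ[Y])[X]` by a principal ideal generated by a polynomial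
with zero constant term is infinite-dimensional over `ℚ`. -/
lemma aux_key (F : Polynomial (Polynomial ℚ)) (hF : (F.coeff 0).coeff 0 = 0) :
    ¬ FiniteDimensional ℚ (Polynomial (Polynomial ℚ) ⧸ Ideal.span {F}) := by
  intro hfd
  obtain ⟨ρ, hρ⟩ := aux_exists_rho F hF
  set ψ : Polynomial ℚ →ₐ[ℚ] (Polynomial (Polynomial ℚ) ⧸ Ideal.span {F}) :=
    (Ideal.Quotient.mkₐ ℚ (Ideal.span {F})).comp ρ with hψ
  have hinj : Function.Injective ψ := by
    rw [injective_iff_map_eq_zero]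
    intro p hp
    apply hρ
    apply Ideal.mem_span_singleton.mp
    exact (Ideal.Quotient.eq_zero_iff_mem).mp (by simpa [hψ] using hp)
  have : FiniteDimensional ℚ (Polynomial ℚ) :=
    FiniteDimensional.of_injective ψ.toLinearMap hinj
  exact Polynomial.not_finite this

/-! ### The statement -/

/-- The tensor product algebra `B = Λ_ℚ(x,y) ⊗_ℚ ℚ[t₁,t₂]`. -/
noncomputable abbrev stmt6B :=
  ExteriorAlgebra ℚ (Fin 2 → ℚ) ⊗[ℚ] MvPolynomial (Fin 2) ℚ

/-- The generator `x` of the exterior algebra `Λ_ℚ(x,y)`. -/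
noncomputable def stmt6x : ExteriorAlgebra ℚ (Fin 2 → ℚ) :=
  ExteriorAlgebra.ι ℚ (Pi.single 0 1)

/-- The generator `y` of the exterior algebra `Λ_ℚ(x,y)`. -/
noncomputable def stmt6y : ExteriorAlgebra ℚ (Fin 2 → ℚ) :=
  ExteriorAlgebra.ι ℚ (Pi.single 1 1)

/-- The element `(x∧y)⊗t₁ + a·(x∧y)⊗t₂ + 1⊗f` of `B`. -/
noncomputable def stmt6e (a : ℚ) (f : MvPolynomial (Fin 2) ℚ) : stmt6B :=
  (stmt6x * stmt6y) ⊗ₜ[ℚ] MvPolynomial.X 0 +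
    a • ((stmt6x * stmt6y) ⊗ₜ[ℚ] MvPolynomial.X 1) + 1 ⊗ₜ[ℚ] f

/-! ### More auxiliary material, depending on the statement definitions -/

/-- The first factor map `Λ(x,y) → T/(F)` (kill the exterior generators). -/
noncomputable def auxF1 (f : MvPolynomial (Fin 2) ℚ) :
    ExteriorAlgebra ℚ (Fin 2 → ℚ) →ₐ[ℚ] (Polynomial (Polynomial ℚ) ⧸ Ideal.span {auxPhi f}) :=
  (Algebra.ofId ℚ _).comp ExteriorAlgebra.algebraMapInv

/-- The second factor map `ℚ[t₁,t₂] → T/(F)`. -/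
noncomputable def auxF2 (f : MvPolynomial (Fin 2) ℚ) :
    MvPolynomial (Fin 2) ℚ →ₐ[ℚ] (Polynomial (Polynomial ℚ) ⧸ Ideal.span {auxPhi f}) :=
  (Ideal.Quotient.mkₐ ℚ (Ideal.span {auxPhi f})).comp auxPhi.toAlgHom

/-- The full map `B → T/(F)`. -/
noncomputable def auxPhiB (f : MvPolynomial (Fin 2) ℚ) :
    stmt6B →ₐ[ℚ] (Polynomial (Polynomial ℚ) ⧸ Ideal.span {auxPhi f}) :=
  Algebra.TensorProduct.productMap (S := Polynomial (Polynomial ℚ) ⧸ Ideal.span {auxPhi f})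
    (auxF1 f) (auxF2 f)

lemma auxF1_x (f : MvPolynomial (Fin 2) ℚ) : auxF1 f stmt6x = 0 := by
  simp [auxF1, stmt6x, ExteriorAlgebra.algebraMapInv, ExteriorAlgebra.lift_ι_apply]

lemma auxF2_f (f : MvPolynomial (Fin 2) ℚ) : auxF2 f f = 0 := by
  simp only [auxF2, AlgHom.comp_apply, Ideal.Quotient.mkₐ_eq_mk, AlgEquiv.toAlgHom_eq_coe,
    AlgHom.coe_coe]
  rw [Ideal.Quotient.eq_zero_iff_mem]
  exact Ideal.mem_span_singleton_self _

lemma auxPhiB_e (a : ℚ) (f : MvPolynomial (Fin 2) ℚ) : auxPhiB f (stmt6e a f) = 0 := by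
  have hxy : auxF1 f (stmt6x * stmt6y) = 0 := by
    rw [map_mul (auxF1 f) stmt6x stmt6y]
    exact mul_eq_zero_of_left (M₀ := Polynomial (Polynomial ℚ) ⧸ Ideal.span {auxPhi f}) (auxF1_x f) _
  have h1 : auxPhiB f ((stmt6x * stmt6y) ⊗ₜ[ℚ] MvPolynomial.X 0) = 0 := by
    rw [auxPhiB, Algebra.TensorProduct.productMap_apply_tmul]
    exact mul_eq_zero_of_left (M₀ := Polynomial (Polynomial ℚ) ⧸ Ideal.span {auxPhi f}) hxy _
  have h2 : auxPhiB f ((stmt6x * stmt6y) ⊗ₜ[ℚ] MvPolynomial.X 1) = 0 := by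
    rw [auxPhiB, Algebra.TensorProduct.productMap_apply_tmul]
    exact mul_eq_zero_of_left (M₀ := Polynomial (Polynomial ℚ) ⧸ Ideal.span {auxPhi f}) hxy _
  have h3 : auxPhiB f ((1 : ExteriorAlgebra ℚ (Fin 2 → ℚ)) ⊗ₜ[ℚ] f) = 0 := by
    rw [auxPhiB, Algebra.TensorProduct.productMap_apply_tmul, map_one (auxF1 f), one_mul]
    exact auxF2_f f
  rw [stmt6e, map_add (auxPhiB f), map_add (auxPhiB f), map_smul (auxPhiB f), h1, h2, h3,
    smul_zero, add_zero, add_zero]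

/-- For every rational `a` and every `f ∈ ℚ[t₁,t₂]` with zero constant term, the quotient of
`B = Λ_ℚ(x,y) ⊗_ℚ ℚ[t₁,t₂]` by the two-sided ideal generated by
`(x∧y)⊗t₁ + a·(x∧y)⊗t₂ + 1⊗f` is an infinite-dimensional `ℚ`-vector space. -/
theorem stmt_6 (a : ℚ) (f : MvPolynomial (Fin 2) ℚ)
    (hf : MvPolynomial.constantCoeff f = 0) :
    ¬ FiniteDimensional ℚ (RingQuot (fun p q : stmt6B => p = stmt6e a f ∧ q = 0)) := by
  intro hfd
  have hcomp : ∀ ⦃x y : stmt6B⦄, (x = stmt6e a f ∧ y = 0) → auxPhiB f x = auxPhiB f y := by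
    rintro x y ⟨rfl, rfl⟩
    rw [auxPhiB_e, map_zero (auxPhiB f)]
  let φbar := RingQuot.liftAlgHom ℚ ⟨auxPhiB f, hcomp⟩
  have hsurj : Function.Surjective φbar := by
    intro q
    obtain ⟨t, rfl⟩ := Ideal.Quotient.mk_surjective (I := Ideal.span {auxPhi f}) q
    refine ⟨RingQuot.mkAlgHom ℚ _ ((1 : ExteriorAlgebra ℚ (Fin 2 → ℚ)) ⊗ₜ[ℚ] auxPhi.symm t), ?_⟩
    rw [show φbar = RingQuot.liftAlgHom ℚ ⟨auxPhiB f, hcomp⟩ from rfl,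
      RingQuot.liftAlgHom_mkAlgHom_apply, auxPhiB,
      Algebra.TensorProduct.productMap_apply_tmul, map_one (auxF1 f), one_mul]
    simp only [auxF2, AlgHom.comp_apply, Ideal.Quotient.mkₐ_eq_mk, AlgEquiv.toAlgHom_eq_coe,
      AlgHom.coe_coe, AlgEquiv.coe_algHom, AlgEquiv.apply_symm_apply]
  have hQfd : FiniteDimensional ℚ (Polynomial (Polynomial ℚ) ⧸ Ideal.span {auxPhi f}) :=
    Module.Finite.of_surjective φbar.toLinearMap hsurj
  exact aux_key (auxPhi f) (auxChi_phi' f hf) hQfd
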